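/- (Threshold stability, equal thresholds.) Let Z = (Z_1,…,Z_D) be a standard MGP random vector, Z_j = E + S_j. Then for every u ≥ 0: P(max_j Z_j > u) = exp(−u) > 0, and for every Borel set B ⊆ ℝ^D, P( (Z_1 − u, …, Z_D − u) ∈ B | max_j Z_j > u ) = P( Z ∈ B ). That is, the conditional distribution of Z − u·1 given Z ≰ u·1 equals the distribution of Z. -/

import Mathlib

open MeasureTheory ProbabilityTheory Set Real

-- memorylessness
lemma memoryless (μ : Measure ℝ) [IsProbabilityMeasure μ]
    (h : ∀ t : ℝ, 0 ≤ t → μ (Ioi t) = ENNReal.ofReal (Real.exp (-t)))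
    {u : ℝ} (hu : 0 ≤ u) {C : Set ℝ} (hC : MeasurableSet C) :
    μ ((· - u) ⁻¹' C ∩ Ioi u) = ENNReal.ofReal (Real.exp (-u)) * μ C := by
  have hIoi : ∀ t : ℝ, μ (Ioi t) = ENNReal.ofReal (Real.exp (-(max t 0))) := by
    intro t
    rcases le_or_gt 0 t with ht | ht
    · rw [max_eq_left ht]; exact h t ht
    · rw [max_eq_right ht.le]
      have h0 := h 0 le_rfl
      simp only [neg_zero, Real.exp_zero, ENNReal.ofReal_one] at h0 ⊢
      have h1 : μ (Ioi (0:ℝ)) ≤ μ (Ioi t) := measure_mono (Ioi_subset_Ioi ht.le)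
      have h2 : μ (Ioi t) ≤ 1 := prob_le_one
      rw [h0] at h1
      exact le_antisymm h2 h1
  have key : (μ.restrict (Ioi u)).map (· - u) = ENNReal.ofReal (Real.exp (-u)) • μ := by
    have : IsFiniteMeasure ((μ.restrict (Ioi u)).map (· - u)) :=
      Measure.isFiniteMeasure_map _ _
    refine MeasureTheory.Measure.ext_of_Iic _ _ (fun t => ?_)
    rw [Measure.map_apply (measurable_sub_const u) measurableSet_Iic,
      Measure.restrict_apply (by measurability)]
    have hset : (· - u) ⁻¹' Iic t ∩ Ioi u = Ioc u (t + u) := by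
      ext x; simp [sub_le_iff_le_add, and_comm]
    rw [hset]
    rcases lt_or_ge t 0 with ht | ht
    · have : Ioc u (t + u) = ∅ := Ioc_eq_empty (by linarith)
      rw [this, measure_empty, Measure.smul_apply, smul_eq_mul]
      have hIic : μ (Iic t) = 0 := by
        have hc : μ (Iic t) = 1 - μ (Ioi t) := by
          have := measure_compl (measurableSet_Ioi (a := t)) (measure_ne_top μ _)
          simpa [compl_Ioi] using this
        rw [hc, hIoi t, max_eq_right ht.le]
        simp
      rw [hIic, mul_zero]
    · have hIoc : μ (Ioc u (t + u)) = μ (Ioi u) - μ (Ioi (t + u)) := by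
        rw [← Ioi_diff_Ioi]
        exact measure_diff (Ioi_subset_Ioi (by linarith)) measurableSet_Ioi.nullMeasurableSet
          (measure_ne_top μ _)
      rw [hIoc, hIoi u, hIoi (t + u), max_eq_left hu, max_eq_left (by linarith),
        Measure.smul_apply, smul_eq_mul]
      have hIic : μ (Iic t) = ENNReal.ofReal (1 - Real.exp (-t)) := by
        have hc : μ (Iic t) = 1 - μ (Ioi t) := by
          have := measure_compl (measurableSet_Ioi (a := t)) (measure_ne_top μ _)
          simpa [compl_Ioi] using this
        rw [hc, hIoi t, max_eq_left ht, ← ENNReal.ofReal_one,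
          ← ENNReal.ofReal_sub _ (Real.exp_nonneg _)]
      rw [hIic, ← ENNReal.ofReal_mul (Real.exp_nonneg _),
        ← ENNReal.ofReal_sub _ (Real.exp_nonneg _)]
      congr 1
      rw [mul_sub, mul_one, ← Real.exp_add]
      ring_nf
  calc μ ((· - u) ⁻¹' C ∩ Ioi u)
      = (μ.restrict (Ioi u)) ((· - u) ⁻¹' C) := by
        rw [Measure.restrict_apply ((measurable_sub_const u) hC)]
    _ = ((μ.restrict (Ioi u)).map (· - u)) C := by
        rw [Measure.map_apply (measurable_sub_const u) hC]
    _ = ENNReal.ofReal (Real.exp (-u)) * μ C := by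
        rw [key, Measure.smul_apply, smul_eq_mul]

theorem stmt_4
    {Ω : Type*} [MeasureSpace Ω] [IsProbabilityMeasure (ℙ : Measure Ω)]
    {D : ℕ} (hD : 0 < D)
    (E : Ω → ℝ) (S : Ω → Fin D → ℝ)
    (hEmeas : Measurable E) (hSmeas : Measurable S)
    (hEexp : ∀ t : ℝ, 0 ≤ t → ℙ {ω | t < E ω} = ENNReal.ofReal (Real.exp (-t)))
    (hindep : IndepFun E S ℙ)
    (hSle : ∀ j, ∀ᵐ ω ∂ℙ, S ω j ≤ 0)
    (hSmax : ∀ᵐ ω ∂ℙ, (⨆ j, S ω j) = 0) :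
    ∀ u : ℝ, 0 ≤ u →
      (ℙ {ω | u < ⨆ j, (E ω + S ω j)} = ENNReal.ofReal (Real.exp (-u))
        ∧ 0 < ℙ {ω | u < ⨆ j, (E ω + S ω j)})
      ∧ ∀ B : Set (Fin D → ℝ), MeasurableSet B →
        ℙ[{ω | (fun j => E ω + S ω j - u) ∈ B} | {ω | u < ⨆ j, (E ω + S ω j)}]
          = ℙ {ω | (fun j => E ω + S ω j) ∈ B} := by
  have : Nonempty (Fin D) := Fin.pos_iff_nonempty.mp hD
  intro u hu
  -- a.e. sup identity
  have hae : ∀ᵐ ω ∂ℙ, (⨆ j, (E ω + S ω j)) = E ω := by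
    filter_upwards [hSmax] with ω hω
    have hbdd : BddAbove (Set.range fun j => S ω j) := (Set.finite_range _).bddAbove
    have : (⨆ j, (E ω + S ω j)) = E ω + ⨆ j, S ω j := by
      apply le_antisymm
      · apply ciSup_le
        intro j
        exact add_le_add (le_refl (E ω)) (le_ciSup hbdd j)
      · obtain ⟨j0, hj0⟩ := exists_eq_ciSup_of_finite (f := fun j => S ω j)
        rw [← hj0]
        exact le_ciSup (f := fun j => E ω + S ω j) (Set.finite_range _).bddAbove j0
    rw [this, hω, add_zero]
  have hμE : ∀ t : ℝ, 0 ≤ t → ((ℙ : Measure Ω).map E) (Set.Ioi t) = ENNReal.ofReal (Real.exp (-t)) := by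
    intro t ht
    rw [Measure.map_apply hEmeas measurableSet_Ioi]
    exact hEexp t ht
  haveI : IsProbabilityMeasure ((ℙ : Measure Ω).map E) := Measure.isProbabilityMeasure_map hEmeas.aemeasurable
  haveI : IsProbabilityMeasure ((ℙ : Measure Ω).map S) := Measure.isProbabilityMeasure_map hSmeas.aemeasurable
  have hT : ℙ {ω | u < ⨆ j, (E ω + S ω j)} = ENNReal.ofReal (Real.exp (-u)) := by
    have heq : {ω | u < ⨆ j, (E ω + S ω j)} =ᵐ[ℙ] {ω | u < E ω} := by
      refine Filter.eventuallyEq_set.mpr ?_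
      filter_upwards [hae] with ω hω
      simp [Set.mem_setOf_eq, hω]
    rw [measure_congr heq]
    exact hEexp u hu
  refine ⟨⟨hT, by rw [hT]; exact ENNReal.ofReal_pos.mpr (Real.exp_pos _)⟩, ?_⟩
  intro B hB
  have hTmeas : MeasurableSet {ω | u < ⨆ j, (E ω + S ω j)} := by
    have hun : {ω | u < ⨆ j, (E ω + S ω j)} = ⋃ j, {ω | u < E ω + S ω j} := by
      ext ω
      simp only [Set.mem_setOf_eq, Set.mem_iUnion]
      exact lt_ciSup_iff (Set.finite_range _).bddAbove
    rw [hun]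
    exact MeasurableSet.iUnion fun j =>
      measurableSet_lt measurable_const (hEmeas.add ((measurable_pi_apply j).comp hSmeas))
  rw [cond_apply hTmeas]
  set A : Set Ω := {ω | (fun j => E ω + S ω j - u) ∈ B} with hA_def
  have hpair : (ℙ : Measure Ω).map (fun ω => (S ω, E ω)) = ((ℙ : Measure Ω).map S).prod ((ℙ : Measure Ω).map E) :=
    (indepFun_iff_map_prod_eq_prod_map_map hSmeas.aemeasurable hEmeas.aemeasurable).mp
      hindep.symm
  set W : Set ((Fin D → ℝ) × ℝ) := {p | (fun j => p.2 + p.1 j - u) ∈ B ∧ u < p.2} with hW_def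
  set W' : Set ((Fin D → ℝ) × ℝ) := {p | (fun j => p.2 + p.1 j) ∈ B} with hW'_def
  have hWmeas : MeasurableSet W := by
    refine MeasurableSet.inter ?_ (measurable_snd measurableSet_Ioi)
    exact (measurable_pi_lambda _ fun j =>
      (measurable_snd.add ((measurable_pi_apply j).comp measurable_fst)).sub
        measurable_const) hB
  have hW'meas : MeasurableSet W' :=
    (measurable_pi_lambda _ fun j =>
      measurable_snd.add ((measurable_pi_apply j).comp measurable_fst)) hB
  have hnum : ℙ ({ω | u < ⨆ j, (E ω + S ω j)} ∩ A)
      = ENNReal.ofReal (Real.exp (-u)) * ℙ {ω | (fun j => E ω + S ω j) ∈ B} := by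
    have h1 : ℙ ({ω | u < ⨆ j, (E ω + S ω j)} ∩ A) = ℙ ({ω | u < E ω} ∩ A) := by
      refine measure_congr (Filter.eventuallyEq_set.mpr ?_)
      filter_upwards [hae] with ω hω
      simp only [Set.mem_inter_iff, Set.mem_setOf_eq, hω]
    have h2 : {ω | u < E ω} ∩ A = (fun ω => (S ω, E ω)) ⁻¹' W := by
      ext ω
      simp only [Set.mem_inter_iff, Set.mem_setOf_eq, Set.mem_preimage, hW_def, hA_def]
      tauto
    have h3 : {ω | (fun j => E ω + S ω j) ∈ B} = (fun ω => (S ω, E ω)) ⁻¹' W' := rfl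
    rw [h1, h2, h3,
      ← Measure.map_apply (hSmeas.prodMk hEmeas) hWmeas,
      ← Measure.map_apply (hSmeas.prodMk hEmeas) hW'meas, hpair,
      Measure.prod_apply hWmeas, Measure.prod_apply hW'meas]
    have hinner : ∀ s : Fin D → ℝ, ((ℙ : Measure Ω).map E) (Prod.mk s ⁻¹' W)
        = ENNReal.ofReal (Real.exp (-u)) * ((ℙ : Measure Ω).map E) (Prod.mk s ⁻¹' W') := by
      intro s
      have hCs : MeasurableSet (Prod.mk s ⁻¹' W') :=
        measurable_prodMk_left hW'meas
      have hset : Prod.mk s ⁻¹' W = (· - u) ⁻¹' (Prod.mk s ⁻¹' W') ∩ Set.Ioi u := by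
        ext e
        have hfe : (fun j => e + s j - u) = (fun j => e - u + s j) := by
          funext j; ring
        simp only [Set.mem_preimage, Set.mem_inter_iff, Set.mem_setOf_eq, Set.mem_Ioi,
          hW_def, hW'_def, hfe]
      rw [hset]
      exact memoryless _ hμE hu hCs
    rw [lintegral_congr hinner,
      lintegral_const_mul _ (measurable_measure_prodMk_left hW'meas)]
  rw [hnum, hT, ← mul_assoc, ENNReal.inv_mul_cancel, one_mul]
  · simp [Real.exp_pos]
  · exact ENNReal.ofReal_ne_top
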